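/- For n ≥ 0 define real matrices a_n, b_n of size 2^n × 2^n recursively: a_0 = b_0 = (1) is the 1×1 identity, and for n ≥ 0: a_{n+1} = fromBlocks 0 b_n I 0 and b_{n+1} = fromBlocks I 0 0 a_n (blocks of size 2^n, I the identity, 0 the zero matrix). Let α = (2 − √2)/2 and β = (√2 − 1)/2, and set L_n = I − α(a_n + a_nᵀ) − β(b_n + b_nᵀ). Write L_{n+1} in 2×2 block form [[P, Q], [R, T]] with blocks of size 2^n. Then for every n ≥ 0: P = (2 − √2)·I is invertible, and the Schur complement satisfies T − R P⁻¹ Q = (√2/2) · L_n. -/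
import Mathlib


open Matrix

/-- `Fin (2^n) ⊕ Fin (2^n) ≃ Fin (2^(n+1))`, used to assemble block matrices. -/
def finEquiv2 (n : ℕ) : Fin (2 ^ n) ⊕ Fin (2 ^ n) ≃ Fin (2 ^ (n + 1)) :=
  finSumFinEquiv.trans (finCongr (by ring))

/-- The permutation matrices `(a_n, b_n)` by which the two generators of the Basilica group
act on level `n` of the binary rooted tree: `a_{n+1} = fromBlocks 0 b_n I 0`,
`b_{n+1} = fromBlocks I 0 0 a_n`. -/
noncomputable def basGen : (n : ℕ) →
    Matrix (Fin (2 ^ n)) (Fin (2 ^ n)) ℝ × Matrix (Fin (2 ^ n)) (Fin (2 ^ n)) ℝ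
  | 0 => (1, 1)
  | n + 1 =>
    let p := basGen n
    (Matrix.reindex (finEquiv2 n) (finEquiv2 n) (Matrix.fromBlocks 0 p.2 1 0),
     Matrix.reindex (finEquiv2 n) (finEquiv2 n) (Matrix.fromBlocks 1 0 0 p.1))

/-- The Dirichlet form matrix `L_n = I − α(a_n + a_nᵀ) − β(b_n + b_nᵀ)` with
`α = (2 − √2)/2` and `β = (√2 − 1)/2`. -/
noncomputable def basL (n : ℕ) : Matrix (Fin (2 ^ n)) (Fin (2 ^ n)) ℝ :=
  1 - ((2 - Real.sqrt 2) / 2) • ((basGen n).1 + (basGen n).1ᵀ) -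
    ((Real.sqrt 2 - 1) / 2) • ((basGen n).2 + (basGen n).2ᵀ)

/-- The generators are orthogonal matrices: `aᵀ a = 1` and `bᵀ b = 1`. -/
lemma basGen_orth : ∀ n : ℕ, (basGen n).1ᵀ * (basGen n).1 = 1 ∧
    (basGen n).2ᵀ * (basGen n).2 = 1 := by
  intro n
  induction n with
  | zero => simp [basGen]
  | succ n ih =>
    have ha := ih.1
    have hb := ih.2
    constructor
    · show (Matrix.reindex (finEquiv2 n) (finEquiv2 n)
          (Matrix.fromBlocks 0 (basGen n).2 1 0))ᵀ *
        Matrix.reindex (finEquiv2 n) (finEquiv2 n)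
          (Matrix.fromBlocks 0 (basGen n).2 1 0) = 1
      simp only [Matrix.reindex_apply, Matrix.transpose_submatrix,
        Matrix.submatrix_mul_equiv, Matrix.fromBlocks_transpose,
        Matrix.fromBlocks_multiply]
      simp [ha, hb, Matrix.fromBlocks_one]
    · show (Matrix.reindex (finEquiv2 n) (finEquiv2 n)
          (Matrix.fromBlocks 1 0 0 (basGen n).1))ᵀ *
        Matrix.reindex (finEquiv2 n) (finEquiv2 n)
          (Matrix.fromBlocks 1 0 0 (basGen n).1) = 1
      simp only [Matrix.reindex_apply, Matrix.transpose_submatrix,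
        Matrix.submatrix_mul_equiv, Matrix.fromBlocks_transpose,
        Matrix.fromBlocks_multiply]
      simp [ha, hb, Matrix.fromBlocks_one]

lemma basL_succ_submatrix (n : ℕ) :
    (basL (n + 1)).submatrix (finEquiv2 n) (finEquiv2 n) =
      Matrix.fromBlocks
        ((2 - Real.sqrt 2) • (1 : Matrix (Fin (2 ^ n)) (Fin (2 ^ n)) ℝ))
        ((-((2 - Real.sqrt 2) / 2)) • ((basGen n).2 + 1))
        ((-((2 - Real.sqrt 2) / 2)) • (1 + (basGen n).2ᵀ))
        (1 - ((Real.sqrt 2 - 1) / 2) • ((basGen n).1 + (basGen n).1ᵀ)) := by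
  have h1 : (1 : Matrix (Fin (2 ^ (n+1))) (Fin (2 ^ (n+1))) ℝ) =
      Matrix.reindex (finEquiv2 n) (finEquiv2 n)
        (Matrix.fromBlocks 1 0 0 (1 : Matrix (Fin (2 ^ n)) (Fin (2 ^ n)) ℝ)) := by
    simp [Matrix.fromBlocks_one]
  show ((1 : Matrix (Fin (2^(n+1))) (Fin (2^(n+1))) ℝ)
      - ((2 - Real.sqrt 2) / 2) • ((basGen (n+1)).1 + (basGen (n+1)).1ᵀ)
      - ((Real.sqrt 2 - 1) / 2) • ((basGen (n+1)).2 + (basGen (n+1)).2ᵀ)).submatrix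
        (finEquiv2 n) (finEquiv2 n) = _
  have hA : (basGen (n+1)).1 = Matrix.reindex (finEquiv2 n) (finEquiv2 n)
      (Matrix.fromBlocks 0 (basGen n).2 1 0) := rfl
  have hB : (basGen (n+1)).2 = Matrix.reindex (finEquiv2 n) (finEquiv2 n)
      (Matrix.fromBlocks 1 0 0 (basGen n).1) := rfl
  rw [hA, hB, h1]
  simp only [Matrix.reindex_apply, Matrix.transpose_submatrix, Matrix.submatrix_sub,
    Matrix.submatrix_add, Matrix.submatrix_smul, Pi.sub_apply, Pi.add_apply, Pi.smul_apply,
    Matrix.submatrix_submatrix, Equiv.symm_comp_self, Matrix.submatrix_id_id,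
    Matrix.fromBlocks_transpose, Matrix.fromBlocks_add, Matrix.fromBlocks_smul,
    Matrix.transpose_zero, Matrix.transpose_one]
  rw [sub_eq_add_neg, sub_eq_add_neg, Matrix.fromBlocks_neg, Matrix.fromBlocks_neg,
    Matrix.fromBlocks_add, Matrix.fromBlocks_add]
  rw [Matrix.fromBlocks_inj]
  refine ⟨by module, by module, by module, by module⟩

/-- Writing `L_{n+1}` in 2×2 block form `[[P, Q], [R, T]]` with blocks of size `2^n`:
`P = (2 − √2)·I` is invertible, and the Schur complement satisfies
`T − R P⁻¹ Q = (√2/2) · L_n`. -/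
theorem basilica_schur_complement (n : ℕ) :
    ((basL (n + 1)).submatrix (finEquiv2 n) (finEquiv2 n)).toBlocks₁₁ =
        (2 - Real.sqrt 2) • (1 : Matrix (Fin (2 ^ n)) (Fin (2 ^ n)) ℝ) ∧
      IsUnit ((basL (n + 1)).submatrix (finEquiv2 n) (finEquiv2 n)).toBlocks₁₁ ∧
      ((basL (n + 1)).submatrix (finEquiv2 n) (finEquiv2 n)).toBlocks₂₂ -
          ((basL (n + 1)).submatrix (finEquiv2 n) (finEquiv2 n)).toBlocks₂₁ *
            (((basL (n + 1)).submatrix (finEquiv2 n) (finEquiv2 n)).toBlocks₁₁)⁻¹ *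
            ((basL (n + 1)).submatrix (finEquiv2 n) (finEquiv2 n)).toBlocks₁₂ =
        (Real.sqrt 2 / 2) • basL n := by
  have hs2 : Real.sqrt 2 ^ 2 = 2 := Real.sq_sqrt (by norm_num)
  have hslt : Real.sqrt 2 < 2 := by
    nlinarith [Real.sqrt_nonneg 2]
  have hc : (2 - Real.sqrt 2) ≠ 0 := by linarith
  rw [basL_succ_submatrix n]
  rw [Matrix.toBlocks_fromBlocks₁₁, Matrix.toBlocks_fromBlocks₁₂,
    Matrix.toBlocks_fromBlocks₂₁, Matrix.toBlocks_fromBlocks₂₂]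
  refine ⟨rfl, ?_, ?_⟩
  · have : IsUnit ((2 - Real.sqrt 2) • (1 : Matrix (Fin (2 ^ n)) (Fin (2 ^ n)) ℝ)) := by
      refine (Matrix.isUnit_iff_isUnit_det _).2 ?_
      simp [Matrix.det_smul, isUnit_iff_ne_zero, hc]
    exact this
  · have hinv : ((2 - Real.sqrt 2) • (1 : Matrix (Fin (2 ^ n)) (Fin (2 ^ n)) ℝ))⁻¹ =
        (2 - Real.sqrt 2)⁻¹ • 1 := by
      apply Matrix.inv_eq_right_inv
      rw [Matrix.smul_mul, Matrix.mul_smul, smul_smul]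
      simp [mul_inv_cancel₀ hc]
    rw [hinv]
    have hb := (basGen_orth n).2
    rw [basL]
    set a := (basGen n).1
    set b := (basGen n).2
    have hRQ : ((-((2 - Real.sqrt 2) / 2)) • (1 + bᵀ)) * ((2 - Real.sqrt 2)⁻¹ • 1) *
        ((-((2 - Real.sqrt 2) / 2)) • (b + 1)) =
        (((2 - Real.sqrt 2)/2)^2 * (2 - Real.sqrt 2)⁻¹) • ((2 : ℝ) • 1 + (b + bᵀ)) := by
      have hm : ((1 : Matrix (Fin (2^n)) (Fin (2^n)) ℝ) + bᵀ) * (b + 1) =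
          (2 : ℝ) • 1 + (b + bᵀ) := by
        rw [add_mul, mul_add, mul_add, one_mul, one_mul, mul_one, hb]
        rw [two_smul]
        abel
      simp only [Matrix.smul_mul, Matrix.mul_smul, Matrix.mul_one, smul_smul]
      rw [hm]
      congr 1
      ring
    rw [hRQ]
    match_scalars <;> field_simp <;> nlinarith [hs2, Real.sqrt_nonneg 2]
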